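/- Define, for s = 0, ..., d-1, the symmetric polynomial D_s(z_1,...,z_d) = Σ_{J ⊂ {1,...,d}, #J = d-s} ∏_{μ<ν, μ,ν ∈ J} (z_μ - z_ν)^2, and let D_s(c) denote its expression in the coefficients c of the monic polynomial with roots z_1,...,z_d. Then for each s, a monic complex polynomial P_c of degree d has at most s distinct complex roots if and only if D_0(c) = D_1(c) = ... = D_{d-s-1}(c) = 0. -/

import Mathlib

open Polynomial Finset

/-- The generalized discriminant `D_s(z_1, ..., z_d) = ∑_{J ⊆ {1,...,d}, #J = d-s}
∏_{μ<ν ∈ J} (z_μ - z_ν)^2`, evaluated on the full root sequence. -/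
noncomputable def gendisc (d s : ℕ) (z : Fin d → ℂ) : ℂ :=
  ∑ J ∈ (Finset.univ : Finset (Fin d)).powersetCard (d - s),
    ∏ p ∈ (J ×ˢ J).filter (fun p => p.1 < p.2), (z p.1 - z p.2) ^ 2

section aux
variable {d : ℕ} (z : Fin d → ℂ)

/-- The summand of `gendisc` for a given index subset. -/
noncomputable def gterm (z : Fin d → ℂ) (J : Finset (Fin d)) : ℂ :=
  ∏ p ∈ (J ×ˢ J).filter (fun p => p.1 < p.2), (z p.1 - z p.2) ^ 2

lemma gterm_eq_zero {J : Finset (Fin d)} (h : ¬ Set.InjOn z ↑J) : gterm z J = 0 := by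
  rw [Set.InjOn] at h
  push_neg at h
  obtain ⟨a, ha, b, hb, hzab, hab⟩ := h
  have ha' : a ∈ J := ha
  have hb' : b ∈ J := hb
  rcases lt_or_gt_of_ne hab with hlt | hlt
  · refine Finset.prod_eq_zero (i := (a, b)) ?_ ?_
    · simp only [Finset.mem_filter, Finset.mem_product]
      exact ⟨⟨ha', hb'⟩, hlt⟩
    · simp [hzab]
  · refine Finset.prod_eq_zero (i := (b, a)) ?_ ?_
    · simp only [Finset.mem_filter, Finset.mem_product]
      exact ⟨⟨hb', ha'⟩, hlt⟩
    · simp [hzab]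

lemma union_filters (J : Finset (Fin d)) :
    (J ×ˢ J).filter (fun p => p.1 < p.2) ∪ (J ×ˢ J).filter (fun p => p.2 < p.1)
      = J.offDiag := by
  ext p
  simp only [Finset.mem_union, Finset.mem_filter, Finset.mem_product, Finset.mem_offDiag]
  constructor
  · rintro (⟨⟨h1, h2⟩, h⟩ | ⟨⟨h1, h2⟩, h⟩) <;> exact ⟨h1, h2, by omega⟩
  · rintro ⟨h1, h2, h⟩
    have : p.1 < p.2 ∨ p.2 < p.1 := lt_or_gt_of_ne (fun hc => h (by exact hc))
    tauto

lemma disj_filters (J : Finset (Fin d)) :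
    Disjoint ((J ×ˢ J).filter (fun p => p.1 < p.2))
      ((J ×ˢ J).filter (fun p => p.2 < p.1)) := by
  rw [Finset.disjoint_left]
  intro p hp hp'
  simp only [Finset.mem_filter] at hp hp'
  omega

lemma card_filter_gt (J : Finset (Fin d)) :
    ((J ×ˢ J).filter (fun p => p.1 < p.2)).card
      = ((J ×ˢ J).filter (fun p => p.2 < p.1)).card := by
  apply Finset.card_nbij Prod.swap
  · intro p hp
    simp only [Finset.mem_coe, Finset.mem_filter, Finset.mem_product] at hp ⊢
    exact ⟨⟨hp.1.2, hp.1.1⟩, hp.2⟩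
  · intro p _ q _ h
    exact Prod.swap_injective h
  · intro p hp
    simp only [Finset.coe_filter, Finset.mem_product, Set.mem_setOf_eq] at hp ⊢
    exact ⟨p.swap, ⟨⟨hp.1.2, hp.1.1⟩, hp.2⟩, Prod.swap_swap p⟩

lemma two_mul_card_filter_lt (J : Finset (Fin d)) :
    2 * ((J ×ˢ J).filter (fun p => p.1 < p.2)).card = J.card * (J.card - 1) := by
  have h := Finset.card_union_of_disjoint (disj_filters J)
  rw [union_filters] at h
  rw [Finset.offDiag_card] at h
  rw [← card_filter_gt] at h
  have hc : J.card * (J.card - 1) = J.card * J.card - J.card := by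
    rw [Nat.mul_sub_one]
  omega

lemma offDiag_prod_eq_sign_mul_gterm (J : Finset (Fin d)) :
    ∏ p ∈ J.offDiag, (z p.1 - z p.2)
      = (-1 : ℂ) ^ ((J ×ˢ J).filter (fun p => p.1 < p.2)).card * gterm z J := by
  rw [← union_filters, Finset.prod_union (disj_filters J)]
  have h2 : ∏ p ∈ (J ×ˢ J).filter (fun p => p.2 < p.1), (z p.1 - z p.2)
      = ∏ p ∈ (J ×ˢ J).filter (fun p => p.1 < p.2), (z p.2 - z p.1) := by
    apply Finset.prod_nbij Prod.swap
    · intro p hp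
      simp only [Finset.mem_filter, Finset.mem_product] at hp ⊢
      exact ⟨⟨hp.1.2, hp.1.1⟩, hp.2⟩
    · intro p _ q _ h
      exact Prod.swap_injective h
    · intro p hp
      simp only [Finset.coe_filter, Finset.mem_product, Set.mem_setOf_eq, Set.mem_image] at hp ⊢
      exact ⟨p.swap, ⟨⟨hp.1.2, hp.1.1⟩, hp.2⟩, Prod.swap_swap p⟩
    · intro p _
      rfl
  rw [h2, ← Finset.prod_mul_distrib]
  have : ∀ p ∈ (J ×ˢ J).filter (fun p : Fin d × Fin d => p.1 < p.2),
      (z p.1 - z p.2) * (z p.2 - z p.1) = (-1) * (z p.1 - z p.2) ^ 2 := by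
    intro p _; ring
  rw [Finset.prod_congr rfl this, Finset.prod_mul_distrib, Finset.prod_const, gterm]

lemma offDiag_prod_eq_image {J : Finset (Fin d)} (hinj : Set.InjOn z ↑J) :
    ∏ p ∈ J.offDiag, (z p.1 - z p.2)
      = ∏ p ∈ (J.image z).offDiag, (p.1 - p.2) := by
  apply Finset.prod_nbij (fun p => (z p.1, z p.2))
  · intro p hp
    simp only [Finset.mem_offDiag] at hp ⊢
    exact ⟨Finset.mem_image_of_mem z hp.1, Finset.mem_image_of_mem z hp.2.1,
      fun h => hp.2.2 (hinj hp.1 hp.2.1 h)⟩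
  · intro p hp q hq h
    simp only [Finset.coe_offDiag, Set.mem_setOf_eq] at hp hq
    simp only [Prod.mk.injEq] at h
    exact Prod.ext (hinj hp.1 hq.1 h.1) (hinj hp.2.1 hq.2.1 h.2)
  · intro q hq
    rw [Finset.mem_coe, Finset.mem_offDiag] at hq
    simp only [Finset.mem_image] at hq
    obtain ⟨⟨a, ha, hza⟩, ⟨b, hb, hzb⟩, hne⟩ := hq
    refine ⟨(a, b), ?_, ?_⟩
    · rw [Finset.mem_coe, Finset.mem_offDiag]
      exact ⟨ha, hb, fun h => hne (by rw [← hza, ← hzb]; exact congrArg z h)⟩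
    · simp [hza, hzb]
  · intro p _
    rfl

/-- For `J` on which `z` is injective, the term only depends on the image. -/
lemma gterm_of_injOn {J : Finset (Fin d)} (hinj : Set.InjOn z ↑J) :
    gterm z J = (-1 : ℂ) ^ (J.card * (J.card - 1) / 2)
      * ∏ p ∈ (J.image z).offDiag, (p.1 - p.2) := by
  have h1 := offDiag_prod_eq_sign_mul_gterm z J
  rw [offDiag_prod_eq_image z hinj] at h1
  have he : ((J ×ˢ J).filter (fun p => p.1 < p.2)).card = J.card * (J.card - 1) / 2 := by
    have := two_mul_card_filter_lt J
    omega
  rw [he] at h1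
  have hsq : ((-1 : ℂ) ^ (J.card * (J.card - 1) / 2)) * ((-1 : ℂ) ^ (J.card * (J.card - 1) / 2)) = 1 := by
    rw [← pow_add]
    exact Even.neg_one_pow ⟨_, rfl⟩
  calc gterm z J = 1 * gterm z J := (one_mul _).symm
    _ = (-1 : ℂ) ^ (J.card * (J.card - 1) / 2) * ((-1 : ℂ) ^ (J.card * (J.card - 1) / 2) * gterm z J) := by
        rw [← mul_assoc, hsq]
    _ = _ := by rw [← h1]

end aux

/-- A monic complex polynomial of degree `d` with root sequence `z` (with multiplicity)
has at most `s` distinct roots if and only if the generalized discriminants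
`D_0, ..., D_{d-s-1}` all vanish on its coefficients. -/
theorem gendisc_char_distinct_roots (d s : ℕ) (hs : s < d) (c : Fin d → ℂ)
    (z : Fin d → ℂ)
    (hz : Polynomial.X ^ d + ∑ i : Fin d, Polynomial.C (c i) *
        Polynomial.X ^ (d - 1 - (i : ℕ)) =
      ∏ i : Fin d, (Polynomial.X - Polynomial.C (z i))) :
    ((Finset.univ : Finset (Fin d)).image z).card ≤ s ↔
      ∀ j < d - s, gendisc d j z = 0 := by
  classical
  set S : Finset ℂ := (Finset.univ : Finset (Fin d)).image z with hS
  set k := S.card with hk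
  have hkd : k ≤ d := le_trans (Finset.card_image_le) (by simp)
  constructor
  · -- easy direction
    intro hks j hj
    rw [gendisc]
    apply Finset.sum_eq_zero
    intro J hJ
    rw [Finset.mem_powersetCard] at hJ
    have hcard : J.card = d - j := hJ.2
    have hbig : k < J.card := by omega
    have hni : ¬ Set.InjOn z ↑J := by
      intro hinj
      have h1 : (J.image z).card = J.card := Finset.card_image_iff.2 hinj
      have h2 : J.image z ⊆ S := Finset.image_subset_image (Finset.subset_univ J)
      have := Finset.card_le_card h2
      omega
    exact gterm_eq_zero z hni
  · -- hard direction: contrapositive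
    intro hD
    by_contra hks
    push_neg at hks
    have hkpos : 0 < k := lt_of_le_of_lt (Nat.zero_le s) hks
    have hj : d - k < d - s := by omega
    have hzero := hD (d - k) hj
    apply absurd hzero
    rw [gendisc]
    have hdk : d - (d - k) = k := by omega
    rw [hdk]
    show (∑ J ∈ (Finset.univ : Finset (Fin d)).powersetCard k, gterm z J) ≠ 0
    -- split the sum into injective / non-injective parts
    rw [← Finset.sum_filter_add_sum_filter_not ((Finset.univ : Finset (Fin d)).powersetCard k)
      (fun J : Finset (Fin d) => Set.InjOn z ↑J) (gterm z)]
    have hzero2 : ∑ J ∈ ((Finset.univ : Finset (Fin d)).powersetCard k).filter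
        (fun J : Finset (Fin d) => ¬ Set.InjOn z ↑J), gterm z J = 0 := by
      apply Finset.sum_eq_zero
      intro J hJ
      exact gterm_eq_zero z (Finset.mem_filter.1 hJ).2
    rw [hzero2, add_zero]
    -- on the injective part, each term equals a fixed nonzero constant
    set T : ℂ := (-1 : ℂ) ^ (k * (k - 1) / 2) * ∏ p ∈ S.offDiag, (p.1 - p.2) with hT
    have hconst : ∀ J ∈ ((Finset.univ : Finset (Fin d)).powersetCard k).filter
        (fun J : Finset (Fin d) => Set.InjOn z ↑J), gterm z J = T := by
      intro J hJ
      rw [Finset.mem_filter, Finset.mem_powersetCard] at hJ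
      obtain ⟨⟨_, hcard⟩, hinj⟩ := hJ
      have himg : J.image z = S := by
        apply Finset.eq_of_subset_of_card_le
        · exact Finset.image_subset_image (Finset.subset_univ J)
        · rw [Finset.card_image_iff.2 hinj, hcard]
      rw [gterm_of_injOn z hinj, himg, hcard]
    rw [Finset.sum_congr rfl hconst, Finset.sum_const, nsmul_eq_mul]
    -- nonvanishing of T
    have hTne : T ≠ 0 := by
      rw [hT]
      apply mul_ne_zero
      · exact pow_ne_zero _ (by norm_num)
      · apply Finset.prod_ne_zero_iff.2
        intro p hp
        rw [Finset.mem_offDiag] at hp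
        exact sub_ne_zero.2 hp.2.2
    -- the injective part is nonempty: pick one preimage for each value
    have hne : (((Finset.univ : Finset (Fin d)).powersetCard k).filter
        (fun J : Finset (Fin d) => Set.InjOn z ↑J)).Nonempty := by
      have hchoice : ∀ w ∈ S, ∃ i : Fin d, z i = w := by
        intro w hw
        rw [hS, Finset.mem_image] at hw
        obtain ⟨i, _, hi⟩ := hw
        exact ⟨i, hi⟩
      choose g hg using hchoice
      refine ⟨S.attach.image (fun w => g w.1 w.2), ?_⟩
      rw [Finset.mem_filter, Finset.mem_powersetCard]
      have hginj : Set.InjOn (fun w : {x // x ∈ S} => g w.1 w.2) ↑S.attach := by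
        intro a _ b _ hab
        have h1 : (a : ℂ) = b := by simpa [hg] using congrArg z hab
        exact Subtype.ext h1
      refine ⟨⟨Finset.subset_univ _, ?_⟩, ?_⟩
      · rw [Finset.card_image_of_injOn hginj, Finset.card_attach]
      · intro a ha b hb hab
        simp only [Finset.coe_image, Set.mem_image] at ha hb
        obtain ⟨wa, hwa, rfl⟩ := ha
        obtain ⟨wb, hwb, rfl⟩ := hb
        rw [hg wa.1 wa.2, hg wb.1 wb.2] at hab
        rw [Subtype.ext hab]
    rw [← Finset.card_pos] at hne
    exact mul_ne_zero (Nat.cast_ne_zero.2 (by omega)) hTne
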